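/- Let ℓ, n, m ≥ 1 and identify Σ_{ℓ,n,m} = ℝ^{ℓ×n} × ℝ^{ℓ×n} × ℝ^{ℓ×m} with ℝ^{ℓ(2n+m)}. The set S = {(E,A,B) ∈ Σ_{ℓ,n,m} : for every λ ∈ ℂ with Re λ ≥ 0, rk [E, A, B] = rk [E, B] = rk_ℂ [λE − A, B]} (the set of completely stabilizable differential-algebraic systems d/dt(Ex) = Ax + Bu) is generic if, and only if, ℓ < n + m. -/

import Mathlib

/-- A set `V ⊆ ℝ^N` is an algebraic variety if it is the common zero locus of
finitely many polynomials. -/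
def IsAlgVariety {ι F : Type} [CommRing F] (V : Set (ι → F)) : Prop :=
  ∃ (k : ℕ) (p : Fin k → MvPolynomial ι F),
    V = {x | ∀ i, MvPolynomial.eval x (p i) = 0}

/-- A set `S ⊆ ℝ^N` is generic if its complement is contained in a proper
algebraic variety. -/
def IsGeneric {ι F : Type} [CommRing F] (S : Set (ι → F)) : Prop :=
  ∃ V : Set (ι → F), IsAlgVariety V ∧ V ≠ Set.univ ∧ Sᶜ ⊆ V

/-- Index set of the coordinates of `Σ_{ℓ,n,m} = ℝ^{ℓ×n} × ℝ^{ℓ×n} × ℝ^{ℓ×m} ≅ ℝ^{ℓ(2n+m)}`. -/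
abbrev SigmaIdx (l n m : ℕ) : Type := (Fin l × Fin n) ⊕ (Fin l × Fin n) ⊕ (Fin l × Fin m)

/-- The matrix `E` of a point of `Σ_{ℓ,n,m}`. -/
def Emat {l n m : ℕ} (x : SigmaIdx l n m → ℝ) : Matrix (Fin l) (Fin n) ℝ :=
  Matrix.of fun i j => x (Sum.inl (i, j))

/-- The matrix `A` of a point of `Σ_{ℓ,n,m}`. -/
def Amat {l n m : ℕ} (x : SigmaIdx l n m → ℝ) : Matrix (Fin l) (Fin n) ℝ :=
  Matrix.of fun i j => x (Sum.inr (Sum.inl (i, j)))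

/-- The matrix `B` of a point of `Σ_{ℓ,n,m}`. -/
def Bmat {l n m : ℕ} (x : SigmaIdx l n m → ℝ) : Matrix (Fin l) (Fin m) ℝ :=
  Matrix.of fun i j => x (Sum.inr (Sum.inr (i, j)))

/-- The complex matrix `[λE − A, B] ∈ ℂ^{ℓ×(n+m)}` (real matrices viewed as complex). -/
noncomputable def pencilC {l n m : ℕ} (E A : Matrix (Fin l) (Fin n) ℝ)
    (B : Matrix (Fin l) (Fin m) ℝ) (lam : ℂ) :
    Matrix (Fin l) (Fin n ⊕ Fin m) ℂ :=
  Matrix.fromCols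
    (Matrix.of fun i j => lam * (E i j : ℂ) - (A i j : ℂ))
    (Matrix.of fun i j => (B i j : ℂ))


noncomputable section
namespace Stab
open Matrix Polynomial

variable {F : Type*} [Field F]

/-- selection matrix -/
def sel {γ α : Type*} [Fintype α] [DecidableEq α] (r : γ → α) : Matrix γ α F :=
  Matrix.of fun i j => if r i = j then 1 else 0

lemma submatrix_eq_mul {α β γ δ : Type*} [Fintype α] [Fintype β] [DecidableEq α] [DecidableEq β]
    (A : Matrix α β F) (r : γ → α) (c : δ → β) :
    A.submatrix r c = (sel r : Matrix γ α F) * A * (sel c : Matrix δ β F)ᵀ := by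
  ext i d
  simp [sel, Matrix.mul_apply, Matrix.transpose_apply, ite_mul, mul_ite,
    Finset.sum_ite_eq, Finset.sum_ite_eq']

lemma rank_submatrix_le' {α β γ δ : Type*} [Fintype α] [Fintype β] [Fintype γ] [Fintype δ]
    [DecidableEq α] [DecidableEq β]
    (A : Matrix α β F) (r : γ → α) (c : δ → β) :
    (A.submatrix r c).rank ≤ A.rank := by
  rw [submatrix_eq_mul]
  exact le_trans (Matrix.rank_mul_le_left _ _) (Matrix.rank_mul_le_right _ _)

lemma rank_eq_card_of_det_submatrix_ne_zero {α β : Type*} [Fintype α] [Fintype β]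
    [DecidableEq α] [DecidableEq β]
    (A : Matrix α β F) (c : α → β) (h : (A.submatrix id c).det ≠ 0) :
    A.rank = Fintype.card α := by
  refine le_antisymm (Matrix.rank_le_card_height A) ?_
  have h1 : (A.submatrix id c).rank = Fintype.card α :=
    Matrix.rank_of_isUnit _ (Matrix.isUnit_iff_isUnit_det _ |>.mpr (isUnit_iff_ne_zero.mpr h))
  calc Fintype.card α = (A.submatrix id c).rank := h1.symm
    _ ≤ A.rank := rank_submatrix_le' A id c

lemma rank_lt_card_of_det_eq_zero {α : Type*} [Fintype α] [DecidableEq α] [Nonempty α]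
    (M : Matrix α α F) (h : M.det = 0) : M.rank < Fintype.card α := by
  obtain ⟨v, hv, hMv⟩ := (Matrix.exists_mulVec_eq_zero_iff).mpr h
  have hker : 0 < Module.finrank F (LinearMap.ker M.mulVecLin) := by
    rw [Module.finrank_pos_iff]
    exact ⟨⟨⟨v, by simpa [Matrix.mulVecLin_apply] using hMv⟩, 0, by simpa using hv⟩⟩
  have hrn := LinearMap.finrank_range_add_finrank_ker M.mulVecLin
  have : Module.finrank F (α → F) = Fintype.card α := Module.finrank_pi F
  rw [Matrix.rank]
  omega

lemma sum_range_ite_lt (l p : ℕ) :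
    (∑ i ∈ Finset.range l, (if i < p then 1 else 0)) = min p l := by
  induction l with
  | zero => simp
  | succ l ih =>
    rw [Finset.sum_range_succ, ih]
    by_cases h : l < p <;> simp [h] <;> omega

lemma prod_range_ite_lt {M : Type*} [CommMonoid M] (l p : ℕ) (xx : M) :
    (∏ i ∈ Finset.range l, (if i < p then xx else 1)) = xx ^ (min p l) := by
  induction l with
  | zero => simp
  | succ l ih =>
    rw [Finset.prod_range_succ, ih]
    by_cases h : l < p
    · rw [if_pos h, show min p l = l by omega, show min p (l+1) = l+1 by omega, pow_succ]
    · rw [if_neg h, show min p (l+1) = min p l by omega, mul_one]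

lemma prod_univ_ite_lt {M : Type*} [CommMonoid M] (l p : ℕ) (hp : p ≤ l) (xx : M) :
    (∏ t : Fin l, (if (t : ℕ) < p then xx else 1)) = xx ^ p := by
  rw [Fin.prod_univ_eq_prod_range (fun i => if i < p then xx else 1) l,
    prod_range_ite_lt, Nat.min_eq_left hp]

lemma natDegree_det_le_sum {R : Type*} [CommRing R] {k : ℕ}
    (M : Matrix (Fin k) (Fin k) (Polynomial R)) (w : Fin k → ℕ)
    (hM : ∀ i t, (M i t).natDegree ≤ w t) :
    M.det.natDegree ≤ ∑ t, w t := by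
  rw [Matrix.det_apply']
  apply Polynomial.natDegree_sum_le_of_forall_le
  intro σ _
  refine le_trans (Polynomial.natDegree_mul_le) ?_
  have h1 : (Polynomial.natDegree ((Equiv.Perm.sign σ : ℤ) : Polynomial R)) = 0 :=
    Polynomial.natDegree_intCast _
  rw [h1, zero_add]
  refine le_trans (Polynomial.natDegree_prod_le _ _) ?_
  exact Finset.sum_le_sum fun t _ => hM (σ t) t

lemma analyticAt_mvpoly_eval {ι : Type} [Fintype ι] (p : MvPolynomial ι ℝ) (x : ι → ℝ) :
    AnalyticAt ℝ (fun y : ι → ℝ => MvPolynomial.eval y p) x := by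
  induction p using MvPolynomial.induction_on with
  | C a => simpa using analyticAt_const
  | add p q hp hq =>
    have := hp.add hq
    simp only [map_add]
    exact this
  | mul_X p i hp =>
    have hproj : AnalyticAt ℝ (fun y : ι → ℝ => y i) x :=
      (ContinuousLinearMap.proj (R := ℝ) (φ := fun _ : ι => ℝ) i).analyticAt x
    have := hp.mul hproj
    simp only [map_mul, MvPolynomial.eval_X]
    exact this

lemma det_map_submatrix {R S : Type*} [CommRing R] [CommRing S] (f : R →+* S)
    {α β : Type*} [DecidableEq α] [Fintype α] (M : Matrix α β R) (c : α → β) :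
    f ((M.submatrix id c).det) = (((M.map f).submatrix id c)).det := by
  rw [RingHom.map_det]
  congr 1

section Universal

variable (l n m : ℕ)

/-- formal degree of the first minor -/
def aa : ℕ := max (l - m) 1
/-- size of the Sylvester matrix -/
def NN : ℕ := (l - m) + aa l m

/-- first column selection -/
def c1 (h : l < n + m) : Fin l → Fin n ⊕ Fin m := fun t =>
  if ht : (t : ℕ) < l - m then Sum.inl ⟨t, by omega⟩
  else Sum.inr ⟨t - (l - m), by have := t.isLt; omega⟩

/-- second column selection -/
def c2 (h : l < n + m) : Fin l → Fin n ⊕ Fin m := fun t =>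
  if ht : (t : ℕ) < l - m then Sum.inl ⟨t + 1, by omega⟩
  else Sum.inr ⟨t - (l - m), by have := t.isLt; omega⟩

/-- the universal pencil `[X·E − A, B]` over the polynomial ring -/
def pencilU : Matrix (Fin l) (Fin n ⊕ Fin m) (Polynomial (MvPolynomial (SigmaIdx l n m) ℝ)) :=
  Matrix.of fun i j => Sum.elim
    (fun j' => Polynomial.X * Polynomial.C (MvPolynomial.X (Sum.inl (i, j')))
       - Polynomial.C (MvPolynomial.X (Sum.inr (Sum.inl (i, j')))))
    (fun j' => Polynomial.C (MvPolynomial.X (Sum.inr (Sum.inr (i, j'))))) j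

/-- the real pencil at a point `x` -/
def pencilR (x : SigmaIdx l n m → ℝ) : Matrix (Fin l) (Fin n ⊕ Fin m) (Polynomial ℝ) :=
  Matrix.of fun i j => Sum.elim
    (fun j' => Polynomial.X * Polynomial.C (Emat x i j') - Polynomial.C (Amat x i j'))
    (fun j' => Polynomial.C (Bmat x i j')) j

variable (h : l < n + m)

def FU : Polynomial (MvPolynomial (SigmaIdx l n m) ℝ) :=
  ((pencilU l n m).submatrix id (c1 l n m h)).det
def GU : Polynomial (MvPolynomial (SigmaIdx l n m) ℝ) :=
  ((pencilU l n m).submatrix id (c2 l n m h)).det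
def TU : Fin (NN l m) → Polynomial (MvPolynomial (SigmaIdx l n m) ℝ) := fun k =>
  if (k : ℕ) < l - m then Polynomial.X ^ (k : ℕ) * FU l n m h
  else Polynomial.X ^ ((k : ℕ) - (l - m)) * GU l n m h
def SylU : Matrix (Fin (NN l m)) (Fin (NN l m)) (MvPolynomial (SigmaIdx l n m) ℝ) :=
  Matrix.of fun i k => (TU l n m h k).coeff i
def EU : Matrix (Fin l) (Fin n) (MvPolynomial (SigmaIdx l n m) ℝ) :=
  Matrix.of fun i j => MvPolynomial.X (Sum.inl (i, j))
def BU : Matrix (Fin l) (Fin m) (MvPolynomial (SigmaIdx l n m) ℝ) :=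
  Matrix.of fun i j => MvPolynomial.X (Sum.inr (Sum.inr (i, j)))
def minorEBU : MvPolynomial (SigmaIdx l n m) ℝ :=
  ((Matrix.fromCols (EU l n m) (BU l n m)).submatrix id (c1 l n m h)).det
def PU : MvPolynomial (SigmaIdx l n m) ℝ := (SylU l n m h).det * minorEBU l n m h

variable (x : SigmaIdx l n m → ℝ)

def Fx : Polynomial ℝ := ((pencilR l n m x).submatrix id (c1 l n m h)).det
def Gx : Polynomial ℝ := ((pencilR l n m x).submatrix id (c2 l n m h)).det
def Tx : Fin (NN l m) → Polynomial ℝ := fun k =>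
  if (k : ℕ) < l - m then Polynomial.X ^ (k : ℕ) * Fx l n m h x
  else Polynomial.X ^ ((k : ℕ) - (l - m)) * Gx l n m h x
def Sylx : Matrix (Fin (NN l m)) (Fin (NN l m)) ℝ :=
  Matrix.of fun i k => (Tx l n m h x k).coeff i

lemma map_pencilU :
    (pencilU l n m).map (Polynomial.mapRingHom (MvPolynomial.eval x)) = pencilR l n m x := by
  ext i j
  cases j <;>
    simp [pencilU, pencilR, Emat, Amat, Bmat, Polynomial.map_sub, Polynomial.map_mul]

lemma eval_FU : Polynomial.map (MvPolynomial.eval x) (FU l n m h) = Fx l n m h x := by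
  unfold FU Fx
  rw [show (Polynomial.map (MvPolynomial.eval x) (((pencilU l n m).submatrix id (c1 l n m h)).det))
      = ((Polynomial.mapRingHom (MvPolynomial.eval x)) (((pencilU l n m).submatrix id (c1 l n m h)).det)) from rfl,
    det_map_submatrix, map_pencilU]

lemma eval_GU : Polynomial.map (MvPolynomial.eval x) (GU l n m h) = Gx l n m h x := by
  unfold GU Gx
  rw [show (Polynomial.map (MvPolynomial.eval x) (((pencilU l n m).submatrix id (c2 l n m h)).det))
      = ((Polynomial.mapRingHom (MvPolynomial.eval x)) (((pencilU l n m).submatrix id (c2 l n m h)).det)) from rfl,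
    det_map_submatrix, map_pencilU]

lemma map_TU (k : Fin (NN l m)) :
    Polynomial.map (MvPolynomial.eval x) (TU l n m h k) = Tx l n m h x k := by
  unfold TU Tx
  split_ifs <;>
    simp [Polynomial.map_mul, Polynomial.map_pow, eval_FU, eval_GU]

lemma eval_detSylU : MvPolynomial.eval x ((SylU l n m h).det) = (Sylx l n m h x).det := by
  rw [RingHom.map_det]
  congr 1
  ext i k
  simp only [RingHom.mapMatrix_apply, Matrix.map_apply, SylU, Sylx, Matrix.of_apply]
  rw [← map_TU l n m h x k, Polynomial.coeff_map]

lemma eval_minorEBU : MvPolynomial.eval x (minorEBU l n m h)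
    = ((Matrix.fromCols (Emat x) (Bmat x)).submatrix id (c1 l n m h)).det := by
  unfold minorEBU
  rw [det_map_submatrix]
  congr 1
  ext i t
  rcases ht : c1 l n m h t with j | j <;>
    simp [ht, EU, BU, Emat, Bmat]

lemma natDegree_Fx_le (h : l < n + m) (x : SigmaIdx l n m → ℝ) :
    (Fx l n m h x).natDegree ≤ l - m := by
  have key := natDegree_det_le_sum ((pencilR l n m x).submatrix id (c1 l n m h))
      (fun t => if (t : ℕ) < l - m then 1 else 0) ?_
  · refine le_trans key ?_
    rw [Fin.sum_univ_eq_sum_range (fun i => if i < l - m then 1 else 0) l, sum_range_ite_lt]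
    omega
  · intro i t
    simp only [Matrix.submatrix_apply, id_eq]
    unfold c1
    split_ifs with ht
    · simp only [pencilR, Matrix.of_apply, Sum.elim_inl]
      refine le_trans (Polynomial.natDegree_sub_le _ _) (max_le ?_ ?_)
      · exact le_trans (Polynomial.natDegree_mul_le)
          (by simp [Polynomial.natDegree_X, Polynomial.natDegree_C])
      · simp [Polynomial.natDegree_C]
    · simp [pencilR, Polynomial.natDegree_C]

lemma natDegree_Gx_le (h : l < n + m) (x : SigmaIdx l n m → ℝ) :
    (Gx l n m h x).natDegree ≤ l - m := by
  have key := natDegree_det_le_sum ((pencilR l n m x).submatrix id (c2 l n m h))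
      (fun t => if (t : ℕ) < l - m then 1 else 0) ?_
  · refine le_trans key ?_
    rw [Fin.sum_univ_eq_sum_range (fun i => if i < l - m then 1 else 0) l, sum_range_ite_lt]
    omega
  · intro i t
    simp only [Matrix.submatrix_apply, id_eq]
    unfold c2
    split_ifs with ht
    · simp only [pencilR, Matrix.of_apply, Sum.elim_inl]
      refine le_trans (Polynomial.natDegree_sub_le _ _) (max_le ?_ ?_)
      · exact le_trans (Polynomial.natDegree_mul_le)
          (by simp [Polynomial.natDegree_X, Polynomial.natDegree_C])
      · simp [Polynomial.natDegree_C]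
    · simp [pencilR, Polynomial.natDegree_C]

lemma natDegree_Tx_lt (h : l < n + m) (x : SigmaIdx l n m → ℝ) (k : Fin (NN l m)) :
    (Tx l n m h x k).natDegree < NN l m := by
  have hk' := k.isLt
  have haa : NN l m = (l - m) + max (l - m) 1 := rfl
  unfold Tx
  split_ifs with hk
  · have h1 : (Polynomial.X ^ (k : ℕ) * Fx l n m h x).natDegree ≤ (k : ℕ) + (l - m) :=
      le_trans (Polynomial.natDegree_mul_le)
        (add_le_add (le_of_eq (Polynomial.natDegree_X_pow _)) (natDegree_Fx_le l n m h x))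
    omega
  · have h1 : (Polynomial.X ^ ((k : ℕ) - (l - m)) * Gx l n m h x).natDegree
        ≤ ((k : ℕ) - (l - m)) + (l - m) :=
      le_trans (Polynomial.natDegree_mul_le)
        (add_le_add (le_of_eq (Polynomial.natDegree_X_pow _)) (natDegree_Gx_le l n m h x))
    omega

lemma NN_pos : 0 < NN l m := by
  have haa : 1 ≤ aa l m := le_max_right _ _
  unfold NN
  omega

/-- the `λ`-evaluation ring hom `ℝ[X] →+* ℂ` -/
def phiC (lam : ℂ) : Polynomial ℝ →+* ℂ :=
  (Polynomial.evalRingHom lam).comp (Polynomial.mapRingHom (algebraMap ℝ ℂ))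

lemma phiC_apply (lam : ℂ) (q : Polynomial ℝ) :
    phiC lam q = Polynomial.eval lam (q.map (algebraMap ℝ ℂ)) := rfl

lemma map_pencilR_phiC (x : SigmaIdx l n m → ℝ) (lam : ℂ) :
    (pencilR l n m x).map (phiC lam) = pencilC (Emat x) (Amat x) (Bmat x) lam := by
  ext i j
  cases j <;>
    simp [pencilR, pencilC, phiC, Matrix.fromCols, Complex.coe_algebraMap] <;> ring

lemma det_pencilC_c1 (h : l < n + m) (x : SigmaIdx l n m → ℝ) (lam : ℂ) :
    ((pencilC (Emat x) (Amat x) (Bmat x) lam).submatrix id (c1 l n m h)).det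
      = phiC lam (Fx l n m h x) := by
  rw [Fx, det_map_submatrix (phiC lam), map_pencilR_phiC]

lemma det_pencilC_c2 (h : l < n + m) (x : SigmaIdx l n m → ℝ) (lam : ℂ) :
    ((pencilC (Emat x) (Amat x) (Bmat x) lam).submatrix id (c2 l n m h)).det
      = phiC lam (Gx l n m h x) := by
  rw [Gx, det_map_submatrix (phiC lam), map_pencilR_phiC]

lemma rank_pencilC_eq (h : l < n + m) (x : SigmaIdx l n m → ℝ)
    (hx1 : (Sylx l n m h x).det ≠ 0) (lam : ℂ) :
    (pencilC (Emat x) (Amat x) (Bmat x) lam).rank = l := by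
  -- at least one of the two minors is nonzero at `lam`
  have key : phiC lam (Fx l n m h x) ≠ 0 ∨ phiC lam (Gx l n m h x) ≠ 0 := by
    by_contra hcon
    push_neg at hcon
    obtain ⟨hF, hG⟩ := hcon
    rw [phiC_apply] at hF hG
    set SylC : Matrix (Fin (NN l m)) (Fin (NN l m)) ℂ :=
      (Sylx l n m h x).map (algebraMap ℝ ℂ) with hSylC
    set v : Fin (NN l m) → ℂ := fun i => lam ^ (i : ℕ) with hv
    have hvec : Matrix.vecMul v SylC = 0 := by
      funext k
      have hdeg : ((Tx l n m h x k).map (algebraMap ℝ ℂ)).natDegree < NN l m :=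
        lt_of_le_of_lt (Polynomial.natDegree_map_le) (natDegree_Tx_lt l n m h x k)
      have heval : Polynomial.eval lam ((Tx l n m h x k).map (algebraMap ℝ ℂ))
          = ∑ i ∈ Finset.range (NN l m),
              ((Tx l n m h x k).map (algebraMap ℝ ℂ)).coeff i * lam ^ i :=
        Polynomial.eval_eq_sum_range' hdeg lam
      have hzero : Polynomial.eval lam ((Tx l n m h x k).map (algebraMap ℝ ℂ)) = 0 := by
        unfold Tx
        split_ifs with hk <;>
          simp only [Polynomial.map_mul, Polynomial.map_pow, Polynomial.map_X,
            Polynomial.eval_mul, Polynomial.eval_pow, Polynomial.eval_X]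
        · rw [hF]; ring
        · rw [hG]; ring
      have hcoe : ∀ i : Fin (NN l m),
          SylC i k = ((Tx l n m h x k).map (algebraMap ℝ ℂ)).coeff (i : ℕ) := by
        intro i
        simp [hSylC, Sylx, Polynomial.coeff_map]
      calc Matrix.vecMul v SylC k
          = ∑ i : Fin (NN l m), lam ^ (i : ℕ)
              * ((Tx l n m h x k).map (algebraMap ℝ ℂ)).coeff (i : ℕ) := by
            simp only [Matrix.vecMul, dotProduct, hv]
            exact Finset.sum_congr rfl fun i _ => by rw [hcoe i]
        _ = ∑ i ∈ Finset.range (NN l m),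
              lam ^ i * ((Tx l n m h x k).map (algebraMap ℝ ℂ)).coeff i :=
            Fin.sum_univ_eq_sum_range
              (fun i => lam ^ i * ((Tx l n m h x k).map (algebraMap ℝ ℂ)).coeff i) (NN l m)
        _ = ∑ i ∈ Finset.range (NN l m),
              ((Tx l n m h x k).map (algebraMap ℝ ℂ)).coeff i * lam ^ i := by
            exact Finset.sum_congr rfl fun i _ => mul_comm _ _
        _ = 0 := by rw [← heval, hzero]
    have hvne : v ≠ 0 := by
      intro hcon0
      have : v ⟨0, NN_pos l m⟩ = 0 := by rw [hcon0]; rfl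
      simp [hv] at this
    have hdet0 : SylC.det = 0 := Matrix.exists_vecMul_eq_zero_iff.mp ⟨v, hvne, hvec⟩
    have : algebraMap ℝ ℂ ((Sylx l n m h x).det) = 0 := by
      rw [RingHom.map_det]
      exact hdet0
    rw [Complex.coe_algebraMap, Complex.ofReal_eq_zero] at this
    exact hx1 this
  rcases key with hk | hk
  · have := rank_eq_card_of_det_submatrix_ne_zero
      (pencilC (Emat x) (Amat x) (Bmat x) lam) (c1 l n m h)
      (by rw [det_pencilC_c1]; exact hk)
    simpa using this
  · have := rank_eq_card_of_det_submatrix_ne_zero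
      (pencilC (Emat x) (Amat x) (Bmat x) lam) (c2 l n m h)
      (by rw [det_pencilC_c2]; exact hk)
    simpa using this

lemma rank_EB_eq (h : l < n + m) (x : SigmaIdx l n m → ℝ)
    (hx2 : ((Matrix.fromCols (Emat x) (Bmat x)).submatrix id (c1 l n m h)).det ≠ 0) :
    (Matrix.fromCols (Emat x) (Bmat x)).rank = l := by
  simpa using rank_eq_card_of_det_submatrix_ne_zero _ _ hx2

lemma rank_EAB_eq (h : l < n + m) (x : SigmaIdx l n m → ℝ)
    (hx2 : ((Matrix.fromCols (Emat x) (Bmat x)).submatrix id (c1 l n m h)).det ≠ 0) :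
    (Matrix.fromCols (Emat x) (Matrix.fromCols (Amat x) (Bmat x))).rank = l := by
  have heq : (Matrix.fromCols (Emat x) (Matrix.fromCols (Amat x) (Bmat x))).submatrix id
      (fun t => Sum.map id Sum.inr (c1 l n m h t))
      = (Matrix.fromCols (Emat x) (Bmat x)).submatrix id (c1 l n m h) := by
    ext i t
    rcases ht : c1 l n m h t with j | j <;>
      simp [ht, Matrix.fromCols]
  have := rank_eq_card_of_det_submatrix_ne_zero
    (Matrix.fromCols (Emat x) (Matrix.fromCols (Amat x) (Bmat x)))
    (fun t => Sum.map id Sum.inr (c1 l n m h t)) (by rw [heq]; exact hx2)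
  simpa using this

/-- the certificate: nonvanishing of `PU` implies complete stabilizability -/
lemma mem_S_of_PU (h : l < n + m) (x : SigmaIdx l n m → ℝ)
    (hx : MvPolynomial.eval x (PU l n m h) ≠ 0) :
    ∀ lam : ℂ, 0 ≤ lam.re →
      (Matrix.fromCols (Emat x) (Matrix.fromCols (Amat x) (Bmat x))).rank =
        (Matrix.fromCols (Emat x) (Bmat x)).rank ∧
      (Matrix.fromCols (Emat x) (Bmat x)).rank =
        (pencilC (Emat x) (Amat x) (Bmat x) lam).rank := by
  rw [PU, _root_.map_mul, eval_detSylU, eval_minorEBU] at hx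
  obtain ⟨hx1, hx2⟩ := mul_ne_zero_iff.mp hx
  intro lam _
  refine ⟨?_, ?_⟩
  · rw [rank_EAB_eq l n m h x hx2, rank_EB_eq l n m h x hx2]
  · rw [rank_EB_eq l n m h x hx2, rank_pencilC_eq l n m h x hx1 lam]

/-- the witness point for `l < n + m` -/
def x0 : SigmaIdx l n m → ℝ := fun idx =>
  match idx with
  | .inl (i, j) => if (i : ℕ) = (j : ℕ) ∧ (j : ℕ) < l - m then 1 else 0
  | .inr (.inl (i, j)) => if (i : ℕ) + 1 = (j : ℕ) ∧ (j : ℕ) ≤ l - m then 1 else 0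
  | .inr (.inr (i, j)) => if (i : ℕ) = (l - m) + (j : ℕ) then 1 else 0

lemma Emat_x0 (i : Fin l) (j : Fin n) :
    Emat (x0 l n m) i j = if (i : ℕ) = (j : ℕ) ∧ (j : ℕ) < l - m then 1 else 0 := rfl
lemma Amat_x0 (i : Fin l) (j : Fin n) :
    Amat (x0 l n m) i j = if (i : ℕ) + 1 = (j : ℕ) ∧ (j : ℕ) ≤ l - m then 1 else 0 := rfl
lemma Bmat_x0 (i : Fin l) (j : Fin m) :
    Bmat (x0 l n m) i j = if (i : ℕ) = (l - m) + (j : ℕ) then 1 else 0 := rfl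

lemma Fx_x0 (h : l < n + m) : Fx l n m h (x0 l n m) = Polynomial.X ^ (l - m) := by
  unfold Fx
  rw [Matrix.det_of_upperTriangular]
  · have hdiag : ∀ t : Fin l, ((pencilR l n m (x0 l n m)).submatrix id (c1 l n m h)) t t
        = if (t : ℕ) < l - m then (Polynomial.X : Polynomial ℝ) else 1 := by
      intro t
      simp only [Matrix.submatrix_apply, id_eq]
      unfold c1
      split_ifs with ht
      · simp [pencilR, Emat_x0, Amat_x0, ht]
      · simp only [pencilR, Matrix.of_apply, Sum.elim_inr, Bmat_x0]
        rw [if_pos (by show (t : ℕ) = l - m + ((t : ℕ) - (l - m)); omega)]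
        simp
    rw [Finset.prod_congr rfl fun t _ => hdiag t]
    exact prod_univ_ite_lt l (l - m) (by omega) _
  · intro i t hlt
    simp only [Matrix.submatrix_apply, id_eq]
    unfold c1
    have hti : (t : ℕ) < (i : ℕ) := hlt
    split_ifs with ht
    · simp only [pencilR, Matrix.of_apply, Sum.elim_inl, Emat_x0, Amat_x0]
      rw [if_neg (by omega), if_neg (by omega)]
      simp
    · simp only [pencilR, Matrix.of_apply, Sum.elim_inr, Bmat_x0]
      rw [if_neg (by show ¬ ((i : ℕ) = l - m + ((t : ℕ) - (l - m))); omega)]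
      simp

lemma Gx_x0 (h : l < n + m) : Gx l n m h (x0 l n m) = (-1 : Polynomial ℝ) ^ (l - m) := by
  unfold Gx
  rw [Matrix.det_of_lowerTriangular]
  · have hdiag : ∀ t : Fin l, ((pencilR l n m (x0 l n m)).submatrix id (c2 l n m h)) t t
        = if (t : ℕ) < l - m then (-1 : Polynomial ℝ) else 1 := by
      intro t
      simp only [Matrix.submatrix_apply, id_eq]
      unfold c2
      split_ifs with ht
      · simp only [pencilR, Matrix.of_apply, Sum.elim_inl, Emat_x0, Amat_x0]
        rw [if_neg (by show ¬ ((t : ℕ) = (t : ℕ) + 1 ∧ (t : ℕ) + 1 < l - m); omega),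
          if_pos (⟨trivial, by omega⟩ : True ∧ (t : ℕ) + 1 ≤ l - m)]
        simp
      · simp only [pencilR, Matrix.of_apply, Sum.elim_inr, Bmat_x0]
        rw [if_pos (by show (t : ℕ) = l - m + ((t : ℕ) - (l - m)); omega)]
        simp
    rw [Finset.prod_congr rfl fun t _ => hdiag t]
    exact prod_univ_ite_lt l (l - m) (by omega) _
  · intro i t hlt
    simp only [Matrix.submatrix_apply, id_eq]
    unfold c2
    have hti : (i : ℕ) < (t : ℕ) := hlt
    split_ifs with ht
    · simp only [pencilR, Matrix.of_apply, Sum.elim_inl, Emat_x0, Amat_x0]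
      rw [if_neg (by show ¬ ((i : ℕ) = (t : ℕ) + 1 ∧ (t : ℕ) + 1 < l - m); omega),
        if_neg (by show ¬ ((i : ℕ) + 1 = (t : ℕ) + 1 ∧ (t : ℕ) + 1 ≤ l - m); omega)]
      simp
    · simp only [pencilR, Matrix.of_apply, Sum.elim_inr, Bmat_x0]
      rw [if_neg (by show ¬ ((i : ℕ) = l - m + ((t : ℕ) - (l - m))); omega)]
      simp

lemma detSylx_x0 (h : l < n + m) : (Sylx l n m h (x0 l n m)).det ≠ 0 := by
  intro hdet
  obtain ⟨v, hv, hvec⟩ := Matrix.exists_vecMul_eq_zero_iff.mpr hdet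
  apply hv
  have hC : ((-1 : Polynomial ℝ)) ^ (l - m) = Polynomial.C ((-1 : ℝ) ^ (l - m)) := by
    rw [map_pow]
    norm_num
  have hcomp : ∀ k : Fin (NN l m),
      Matrix.vecMul v (Sylx l n m h (x0 l n m)) k
        = ∑ i : Fin (NN l m), v i * (Tx l n m h (x0 l n m) k).coeff (i : ℕ) := by
    intro k
    rfl
  funext j
  by_cases hj : (j : ℕ) < aa l m
  · -- use a `G`-column
    set k : Fin (NN l m) := ⟨(j : ℕ) + (l - m), by have := j.isLt; unfold NN at *; omega⟩ with hk
    have hknot : ¬ ((k : ℕ) < l - m) := by simp [hk]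
    have hTk : Tx l n m h (x0 l n m) k
        = Polynomial.C ((-1 : ℝ) ^ (l - m)) * Polynomial.X ^ ((k : ℕ) - (l - m)) := by
      unfold Tx
      rw [if_neg hknot, Gx_x0, hC, mul_comm]
    have h0 : (0 : ℝ) = ∑ i : Fin (NN l m), v i * (Tx l n m h (x0 l n m) k).coeff (i : ℕ) := by
      rw [← hcomp, hvec]
      rfl
    rw [Finset.sum_eq_single_of_mem j (Finset.mem_univ j) ?side] at h0
    · rw [hTk] at h0
      simp only [Polynomial.coeff_C_mul, Polynomial.coeff_X_pow] at h0
      rw [if_pos (by omega : (j : ℕ) = (j : ℕ) + (l - m) - (l - m))] at h0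
      have hne : ((-1 : ℝ) ^ (l - m)) ≠ 0 := by
        apply pow_ne_zero
        norm_num
      have := h0.symm
      rw [mul_comm (v j)] at this
      simp only [mul_one] at this
      rcases mul_eq_zero.mp this with hc | hc
      · exact absurd hc hne
      · exact hc
    case side =>
      intro i _ hij
      rw [hTk]
      simp only [Polynomial.coeff_C_mul, Polynomial.coeff_X_pow]
      rw [if_neg (fun hcon : (i : ℕ) = (j : ℕ) + (l - m) - (l - m) =>
        hij (Fin.ext (by omega)))]
      simp
  · -- use an `F`-column; here necessarily `aa = l - m ≥ 1`
    have hjlt := j.isLt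
    have haux : NN l m = (l - m) + aa l m := rfl
    have hlm : 1 ≤ l - m := by
      by_contra hcon
      have : l - m = 0 := by omega
      have : aa l m = 1 := by unfold aa; rw [this]; simp
      omega
    have haa : aa l m = l - m := by unfold aa; exact Nat.max_eq_left hlm
    set k : Fin (NN l m) := ⟨(j : ℕ) - aa l m, by omega⟩ with hk
    have hkyes : ((k : ℕ) < l - m) := by
      rw [hk]
      show (j : ℕ) - aa l m < l - m
      omega
    have hTk : Tx l n m h (x0 l n m) k
        = Polynomial.X ^ ((k : ℕ) + (l - m)) := by
      unfold Tx
      rw [if_pos hkyes, Fx_x0, ← pow_add]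
    have h0 : (0 : ℝ) = ∑ i : Fin (NN l m), v i * (Tx l n m h (x0 l n m) k).coeff (i : ℕ) := by
      rw [← hcomp, hvec]
      rfl
    rw [Finset.sum_eq_single_of_mem j (Finset.mem_univ j) ?side2] at h0
    · rw [hTk] at h0
      simp only [Polynomial.coeff_X_pow] at h0
      rw [if_pos (by omega : (j : ℕ) = (j : ℕ) - aa l m + (l - m))] at h0
      simpa using h0.symm
    case side2 =>
      intro i _ hij
      rw [hTk]
      simp only [Polynomial.coeff_X_pow]
      rw [if_neg (fun hcon : (i : ℕ) = (j : ℕ) - aa l m + (l - m) =>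
        hij (Fin.ext (by omega)))]
      simp

lemma minorEB_x0 (h : l < n + m) :
    ((Matrix.fromCols (Emat (x0 l n m)) (Bmat (x0 l n m))).submatrix id (c1 l n m h)).det ≠ 0 := by
  have hone : (Matrix.fromCols (Emat (x0 l n m)) (Bmat (x0 l n m))).submatrix id (c1 l n m h)
      = (1 : Matrix (Fin l) (Fin l) ℝ) := by
    ext i t
    simp only [Matrix.submatrix_apply, id_eq, Matrix.one_apply]
    unfold c1
    split_ifs with ht h2 h2
    · rw [Matrix.fromCols_apply_inl, Emat_x0, if_pos (by rw [Fin.ext_iff] at h2; exact ⟨h2, ht⟩)]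
    · rw [Matrix.fromCols_apply_inl, Emat_x0,
        if_neg (by rw [Fin.ext_iff] at h2; intro hcon; exact h2 hcon.1)]
    · rw [Matrix.fromCols_apply_inr, Bmat_x0,
        if_pos (by rw [Fin.ext_iff] at h2
                   show (i : ℕ) = l - m + ((t : ℕ) - (l - m)); omega)]
    · rw [Matrix.fromCols_apply_inr, Bmat_x0,
        if_neg (by rw [Fin.ext_iff] at h2
                   show ¬ ((i : ℕ) = l - m + ((t : ℕ) - (l - m))); omega)]
  rw [hone, Matrix.det_one]
  norm_num

lemma PU_x0_ne_zero (h : l < n + m) : MvPolynomial.eval (x0 l n m) (PU l n m h) ≠ 0 := by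
  rw [PU, _root_.map_mul, eval_detSylU, eval_minorEBU]
  exact mul_ne_zero (detSylx_x0 l n m h) (minorEB_x0 l n m h)

end Universal

section CaseGT
variable (l n m : ℕ)

/-! ### The case `l > n + m` -/

lemma det_map_submatrix' {R S : Type*} [CommRing R] [CommRing S] (f : R →+* S)
    {α β γ : Type*} [DecidableEq γ] [Fintype γ] (M : Matrix α β R) (r : γ → α) (c : γ → β) :
    f ((M.submatrix r c).det) = (((M.map f).submatrix r c)).det := by
  rw [RingHom.map_det]
  congr 1

def AU : Matrix (Fin l) (Fin n) (MvPolynomial (SigmaIdx l n m) ℝ) :=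
  Matrix.of fun i j => MvPolynomial.X (Sum.inr (Sum.inl (i, j)))

def csel (hn : 1 ≤ n) : Fin (n + m + 1) → Fin n ⊕ (Fin n ⊕ Fin m) := fun t =>
  if h1 : (t : ℕ) < n then Sum.inl ⟨t, h1⟩
  else if h2 : (t : ℕ) < n + m then Sum.inr (Sum.inr ⟨(t : ℕ) - n, by omega⟩)
  else Sum.inr (Sum.inl ⟨0, hn⟩)

def rsel (hgt : n + m < l) : Fin (n + m + 1) → Fin l := fun t =>
  ⟨t, by have := t.isLt; omega⟩

def QU (hn : 1 ≤ n) (hgt : n + m < l) : MvPolynomial (SigmaIdx l n m) ℝ :=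
  ((Matrix.fromCols (EU l n m) (Matrix.fromCols (AU l n m) (BU l n m))).submatrix
    (rsel l n m hgt) (csel n m hn)).det

lemma eval_QU (hn : 1 ≤ n) (hgt : n + m < l) (x : SigmaIdx l n m → ℝ) :
    MvPolynomial.eval x (QU l n m hn hgt)
      = ((Matrix.fromCols (Emat x) (Matrix.fromCols (Amat x) (Bmat x))).submatrix
          (rsel l n m hgt) (csel n m hn)).det := by
  unfold QU
  rw [det_map_submatrix']
  have hbase : (Matrix.fromCols (EU l n m) (Matrix.fromCols (AU l n m)
        (BU l n m))).map (MvPolynomial.eval x)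
      = Matrix.fromCols (Emat x) (Matrix.fromCols (Amat x) (Bmat x)) := by
    ext i j
    rcases j with j | j
    · simp [EU, Emat]
    · rcases j with j | j <;> simp [AU, BU, Amat, Bmat]
  rw [hbase]

/-- witness for `l > n + m` -/
def x2 : SigmaIdx l n m → ℝ := fun idx =>
  match idx with
  | .inl (i, j) => if (i : ℕ) = (j : ℕ) then 1 else 0
  | .inr (.inl (i, j)) => if (j : ℕ) = 0 ∧ (i : ℕ) = n + m then 1 else 0
  | .inr (.inr (i, j)) => if (i : ℕ) = n + (j : ℕ) then 1 else 0

lemma eval_QU_x2 (hn : 1 ≤ n) (hgt : n + m < l) :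
    MvPolynomial.eval (x2 l n m) (QU l n m hn hgt) = 1 := by
  rw [eval_QU]
  have hone : (Matrix.fromCols (Emat (x2 l n m)) (Matrix.fromCols (Amat (x2 l n m))
      (Bmat (x2 l n m)))).submatrix (rsel l n m hgt) (csel n m hn)
      = (1 : Matrix (Fin (n + m + 1)) (Fin (n + m + 1)) ℝ) := by
    ext i t
    have htt := t.isLt
    simp only [Matrix.submatrix_apply]
    unfold csel rsel
    split_ifs with h1 h2
    · rw [Matrix.fromCols_apply_inl, Matrix.one_apply]
      show (if (i : ℕ) = (t : ℕ) then (1 : ℝ) else 0) = if i = t then 1 else 0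
      simp [Fin.ext_iff]
    · rw [Matrix.fromCols_apply_inr, Matrix.fromCols_apply_inr, Matrix.one_apply]
      show (if (i : ℕ) = n + ((t : ℕ) - n) then (1 : ℝ) else 0) = if i = t then 1 else 0
      by_cases hit : i = t
      · rw [if_pos (by rw [Fin.ext_iff] at hit; omega), if_pos hit]
      · rw [if_neg (by rw [Fin.ext_iff] at hit; omega), if_neg hit]
    · rw [Matrix.fromCols_apply_inr, Matrix.fromCols_apply_inl, Matrix.one_apply]
      show (if (0 : ℕ) = 0 ∧ (i : ℕ) = n + m then (1 : ℝ) else 0) = if i = t then 1 else 0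
      by_cases hit : i = t
      · rw [if_pos ⟨rfl, by rw [Fin.ext_iff] at hit; omega⟩, if_pos hit]
      · rw [if_neg (fun hc => hit (Fin.ext (by omega))), if_neg hit]
  rw [hone, Matrix.det_one]

lemma notin_S_of_QU (hn : 1 ≤ n) (hgt : n + m < l) (x : SigmaIdx l n m → ℝ)
    (hQ : MvPolynomial.eval x (QU l n m hn hgt) ≠ 0) :
    ¬ (∀ lam : ℂ, 0 ≤ lam.re →
      (Matrix.fromCols (Emat x) (Matrix.fromCols (Amat x) (Bmat x))).rank =
        (Matrix.fromCols (Emat x) (Bmat x)).rank ∧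
      (Matrix.fromCols (Emat x) (Bmat x)).rank =
        (pencilC (Emat x) (Amat x) (Bmat x) lam).rank) := by
  rw [eval_QU] at hQ
  intro hS
  obtain ⟨h1, -⟩ := hS 0 (by norm_num)
  have hrEAB : n + m + 1
      ≤ (Matrix.fromCols (Emat x) (Matrix.fromCols (Amat x) (Bmat x))).rank := by
    have hsq := Matrix.rank_of_isUnit
      ((Matrix.fromCols (Emat x) (Matrix.fromCols (Amat x) (Bmat x))).submatrix
        (rsel l n m hgt) (csel n m hn))
      ((Matrix.isUnit_iff_isUnit_det _).mpr (isUnit_iff_ne_zero.mpr hQ))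
    have hle := rank_submatrix_le'
      (Matrix.fromCols (Emat x) (Matrix.fromCols (Amat x) (Bmat x)))
      (rsel l n m hgt) (csel n m hn)
    rw [hsq] at hle
    simpa using hle
  have hrEB : (Matrix.fromCols (Emat x) (Bmat x)).rank ≤ n + m := by
    have := Matrix.rank_le_card_width (Matrix.fromCols (Emat x) (Bmat x))
    simpa using this
  omega

end CaseGT

section CaseEQ
variable (l n m : ℕ)

/-! ### The case `l = n + m` -/

def ccsel (heq : l = n + m) : Fin l → Fin n ⊕ Fin m := fun t =>
  if h1 : (t : ℕ) < n then Sum.inl ⟨t, h1⟩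
  else Sum.inr ⟨(t : ℕ) - n, by have := t.isLt; omega⟩

def ddsel (heq : l = n + m) : Fin n ⊕ Fin m → Fin l :=
  Sum.elim (fun j => ⟨j, by have := j.isLt; omega⟩)
    (fun j => ⟨n + (j : ℕ), by have := j.isLt; omega⟩)

lemma ccsel_ddsel (heq : l = n + m) (c : Fin n ⊕ Fin m) :
    ccsel l n m heq (ddsel l n m heq c) = c := by
  rcases c with j | j
  · unfold ccsel ddsel
    simp only [Sum.elim_inl]
    exact dif_pos j.isLt
  · unfold ccsel ddsel
    simp only [Sum.elim_inr]
    refine (dif_neg (show ¬ (n + (j : ℕ) < n) by omega)).trans ?_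
    congr 1
    exact Fin.ext (by show n + (j : ℕ) - n = (j : ℕ); omega)

def pmat (heq : l = n + m) (x : SigmaIdx l n m → ℝ) (t : ℝ) : Matrix (Fin l) (Fin l) ℝ :=
  Matrix.of fun i t' => Sum.elim (fun j => t * Emat x i j - Amat x i j)
    (fun j => Bmat x i j) (ccsel l n m heq t')

def ebmat (heq : l = n + m) (x : SigmaIdx l n m → ℝ) : Matrix (Fin l) (Fin l) ℝ :=
  Matrix.of fun i t' => Sum.elim (fun j => Emat x i j) (fun j => Bmat x i j)
    (ccsel l n m heq t')

lemma ebmat_eq (heq : l = n + m) (x : SigmaIdx l n m → ℝ) :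
    ebmat l n m heq x
      = (Matrix.fromCols (Emat x) (Bmat x)).submatrix id (ccsel l n m heq) := by
  ext i t'
  rcases h : ccsel l n m heq t' with j | j <;>
    simp [ebmat, h, Matrix.fromCols]

lemma pencilC_map_pmat (heq : l = n + m) (x : SigmaIdx l n m → ℝ) (t : ℝ) :
    (pencilC (Emat x) (Amat x) (Bmat x) (t : ℂ)).submatrix id (ccsel l n m heq)
      = (pmat l n m heq x t).map (algebraMap ℝ ℂ) := by
  ext i t'
  rcases h : ccsel l n m heq t' with j | j <;>
    simp [pencilC, pmat, h, Complex.coe_algebraMap] <;> push_cast <;> ring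

lemma continuous_pmat_det (heq : l = n + m) (t : ℝ) :
    Continuous fun x : SigmaIdx l n m → ℝ => (pmat l n m heq x t).det := by
  apply Continuous.matrix_det
  apply continuous_matrix
  intro i t'
  rcases hc : ccsel l n m heq t' with j | j
  · simp only [pmat, Matrix.of_apply, hc, Sum.elim_inl]
    exact (continuous_const.mul (continuous_apply _)).sub (continuous_apply _)
  · simp only [pmat, Matrix.of_apply, hc, Sum.elim_inr]
    exact continuous_apply _

lemma continuous_ebmat_det (heq : l = n + m) :
    Continuous fun x : SigmaIdx l n m → ℝ => (ebmat l n m heq x).det := by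
  apply Continuous.matrix_det
  apply continuous_matrix
  intro i t'
  rcases hc : ccsel l n m heq t' with j | j
  · simp only [ebmat, Matrix.of_apply, hc, Sum.elim_inl]
    exact continuous_apply _
  · simp only [ebmat, Matrix.of_apply, hc, Sum.elim_inr]
    exact continuous_apply _

lemma continuous_pmat_det_t (heq : l = n + m) (x : SigmaIdx l n m → ℝ) :
    Continuous fun t : ℝ => (pmat l n m heq x t).det := by
  apply Continuous.matrix_det
  apply continuous_matrix
  intro i t'
  rcases hc : ccsel l n m heq t' with j | j
  · simp only [pmat, Matrix.of_apply, hc, Sum.elim_inl]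
    exact (continuous_id.mul continuous_const).sub continuous_const
  · simp only [pmat, Matrix.of_apply, hc, Sum.elim_inr]
    exact continuous_const

def Uset (heq : l = n + m) : Set (SigmaIdx l n m → ℝ) :=
  {x | (pmat l n m heq x 0).det < 0 ∧ 0 < (pmat l n m heq x 1).det ∧
    (ebmat l n m heq x).det ≠ 0}

lemma isOpen_Uset (heq : l = n + m) : IsOpen (Uset l n m heq) := by
  have h1 : IsOpen {x : SigmaIdx l n m → ℝ | (pmat l n m heq x 0).det < 0} :=
    isOpen_Iio.preimage (continuous_pmat_det l n m heq 0)
  have h2 : IsOpen {x : SigmaIdx l n m → ℝ | 0 < (pmat l n m heq x 1).det} :=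
    isOpen_Ioi.preimage (continuous_pmat_det l n m heq 1)
  have h3 : IsOpen {x : SigmaIdx l n m → ℝ | (ebmat l n m heq x).det ≠ 0} :=
    isOpen_compl_singleton.preimage (continuous_ebmat_det l n m heq)
  exact (h1.inter (h2.inter h3))

lemma Uset_subset (heq : l = n + m) (hn : 1 ≤ n) (x : SigmaIdx l n m → ℝ)
    (hx : x ∈ Uset l n m heq) :
    ¬ (∀ lam : ℂ, 0 ≤ lam.re →
      (Matrix.fromCols (Emat x) (Matrix.fromCols (Amat x) (Bmat x))).rank =
        (Matrix.fromCols (Emat x) (Bmat x)).rank ∧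
      (Matrix.fromCols (Emat x) (Bmat x)).rank =
        (pencilC (Emat x) (Amat x) (Bmat x) lam).rank) := by
  obtain ⟨h0, h1, heb⟩ := hx
  intro hS
  haveI : Nonempty (Fin l) := ⟨⟨0, by omega⟩⟩
  -- a real nonnegative root of the determinant
  obtain ⟨t0, ht0mem, ht0⟩ : ∃ t0 ∈ Set.Icc (0 : ℝ) 1, (pmat l n m heq x t0).det = 0 := by
    have hIV := intermediate_value_Icc (by norm_num : (0 : ℝ) ≤ 1)
      (continuous_pmat_det_t l n m heq x).continuousOn
    have h0mem : (0 : ℝ) ∈ Set.Icc ((pmat l n m heq x 0).det) ((pmat l n m heq x 1).det) :=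
      ⟨le_of_lt h0, le_of_lt h1⟩
    obtain ⟨t0, ht0mem, ht0⟩ := hIV h0mem
    exact ⟨t0, ht0mem, ht0⟩
  obtain ⟨-, h2⟩ := hS (t0 : ℂ) (by rw [Complex.ofReal_re]; exact ht0mem.1)
  have hrEB : (Matrix.fromCols (Emat x) (Bmat x)).rank = l := by
    have := rank_eq_card_of_det_submatrix_ne_zero
      (Matrix.fromCols (Emat x) (Bmat x)) (ccsel l n m heq)
      (by rw [← ebmat_eq]; exact heb)
    simpa using this
  have hdet0 : ((pencilC (Emat x) (Amat x) (Bmat x) ((t0 : ℂ))).submatrix id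
      (ccsel l n m heq)).det = 0 := by
    rw [pencilC_map_pmat, ← RingHom.mapMatrix_apply, ← RingHom.map_det, ht0, map_zero]
  have hlt : ((pencilC (Emat x) (Amat x) (Bmat x) ((t0 : ℂ))).submatrix id
      (ccsel l n m heq)).rank < l := by
    have := rank_lt_card_of_det_eq_zero _ hdet0
    simpa using this
  have hge : (pencilC (Emat x) (Amat x) (Bmat x) ((t0 : ℂ))).rank
      ≤ ((pencilC (Emat x) (Amat x) (Bmat x) ((t0 : ℂ))).submatrix id
        (ccsel l n m heq)).rank := by
    have hco : ((pencilC (Emat x) (Amat x) (Bmat x) ((t0 : ℂ))).submatrix id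
        (ccsel l n m heq)).submatrix id (ddsel l n m heq)
        = pencilC (Emat x) (Amat x) (Bmat x) ((t0 : ℂ)) := by
      rw [Matrix.submatrix_submatrix]
      have : (ccsel l n m heq) ∘ (ddsel l n m heq) = id := funext (ccsel_ddsel l n m heq)
      rw [this]
      simp only [CompTriple.comp_eq, Matrix.submatrix_id_id]
    calc (pencilC (Emat x) (Amat x) (Bmat x) ((t0 : ℂ))).rank
        = (((pencilC (Emat x) (Amat x) (Bmat x) ((t0 : ℂ))).submatrix id
            (ccsel l n m heq)).submatrix id (ddsel l n m heq)).rank := by rw [hco]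
      _ ≤ _ := rank_submatrix_le' _ _ _
  rw [hrEB] at h2
  omega

/-- witness for `l = n + m` -/
def x1 : SigmaIdx l n m → ℝ := fun idx =>
  match idx with
  | .inl (i, j) => if (i : ℕ) = (j : ℕ) then 1 else 0
  | .inr (.inl (i, j)) =>
      if (i : ℕ) = (j : ℕ) then (if (j : ℕ) = 0 then 1/2 else -1) else 0
  | .inr (.inr (i, j)) => if (i : ℕ) = n + (j : ℕ) then 1 else 0

lemma pmat_x1 (heq : l = n + m) (t : ℝ) :
    pmat l n m heq (x1 l n m) t
      = Matrix.diagonal (fun t' : Fin l =>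
          if (t' : ℕ) < n then (t - (if (t' : ℕ) = 0 then 1/2 else -1)) else 1) := by
  ext i t'
  rw [Matrix.diagonal_apply]
  unfold pmat ccsel
  simp only [Matrix.of_apply]
  by_cases h1 : (t' : ℕ) < n
  · rw [dif_pos h1]
    simp only [Sum.elim_inl]
    show t * (if (i : ℕ) = (t' : ℕ) then (1 : ℝ) else 0)
        - (if (i : ℕ) = (t' : ℕ) then (if (t' : ℕ) = 0 then 1/2 else -1) else 0) = _
    by_cases hit : i = t'
    · subst hit
      rw [if_pos rfl, if_pos rfl, if_pos rfl, if_pos h1]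
      ring
    · have hit' : ¬ ((i : ℕ) = (t' : ℕ)) := fun hc => hit (Fin.ext hc)
      rw [if_neg hit', if_neg hit', if_neg hit]
      ring
  · rw [dif_neg h1]
    simp only [Sum.elim_inr]
    show (if (i : ℕ) = n + ((t' : ℕ) - n) then (1 : ℝ) else 0) = _
    by_cases hit : i = t'
    · subst hit
      rw [if_pos (by omega), if_pos rfl, if_neg h1]
    · rw [if_neg (fun hc => hit (Fin.ext (by have := i.isLt; omega))), if_neg hit]

lemma det_pmat_x1_zero (heq : l = n + m) (hn : 1 ≤ n) :
    (pmat l n m heq (x1 l n m) 0).det < 0 := by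
  rw [pmat_x1, Matrix.det_diagonal]
  have hl : 0 < l := by omega
  have hkey : ∏ t' : Fin l,
      (if (t' : ℕ) < n then ((0 : ℝ) - (if (t' : ℕ) = 0 then 1/2 else -1)) else 1)
      = (0 : ℝ) - 1/2 := by
    rw [Finset.prod_eq_single_of_mem (⟨0, hl⟩ : Fin l) (Finset.mem_univ _)]
    · rw [if_pos (show ((⟨0, hl⟩ : Fin l) : ℕ) < n from hn), if_pos rfl]
    · intro b _ hb
      have hb0 : ¬ ((b : ℕ) = 0) := fun hc => hb (Fin.ext hc)
      by_cases hbn : (b : ℕ) < n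
      · rw [if_pos hbn, if_neg hb0]
        norm_num
      · rw [if_neg hbn]
  rw [hkey]
  norm_num

lemma det_pmat_x1_one (heq : l = n + m) :
    0 < (pmat l n m heq (x1 l n m) 1).det := by
  rw [pmat_x1, Matrix.det_diagonal]
  apply Finset.prod_pos
  intro b _
  split_ifs <;> norm_num

lemma ebmat_x1 (heq : l = n + m) :
    ebmat l n m heq (x1 l n m) = (1 : Matrix (Fin l) (Fin l) ℝ) := by
  ext i t'
  rw [Matrix.one_apply]
  unfold ebmat ccsel
  simp only [Matrix.of_apply]
  by_cases h1 : (t' : ℕ) < n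
  · rw [dif_pos h1]
    simp only [Sum.elim_inl]
    show (if (i : ℕ) = (t' : ℕ) then (1 : ℝ) else 0) = _
    by_cases hit : i = t'
    · rw [if_pos (by rw [Fin.ext_iff] at hit; exact hit), if_pos hit]
    · rw [if_neg (fun hc => hit (Fin.ext hc)), if_neg hit]
  · rw [dif_neg h1]
    simp only [Sum.elim_inr]
    show (if (i : ℕ) = n + ((t' : ℕ) - n) then (1 : ℝ) else 0) = _
    by_cases hit : i = t'
    · rw [if_pos (by rw [Fin.ext_iff] at hit; have := t'.isLt; omega), if_pos hit]
    · rw [if_neg (fun hc => hit (Fin.ext (by have := t'.isLt; omega))), if_neg hit]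

lemma x1_mem_Uset (heq : l = n + m) (hn : 1 ≤ n) : x1 l n m ∈ Uset l n m heq := by
  refine ⟨det_pmat_x1_zero l n m heq hn, det_pmat_x1_one l n m heq, ?_⟩
  rw [ebmat_x1, Matrix.det_one]
  norm_num

end CaseEQ
section Main
variable (l n m : ℕ)

lemma isGeneric_of_lt (h : l < n + m) :
    IsGeneric {x : SigmaIdx l n m → ℝ |
        ∀ lam : ℂ, 0 ≤ lam.re →
          (Matrix.fromCols (Emat x) (Matrix.fromCols (Amat x) (Bmat x))).rank =
            (Matrix.fromCols (Emat x) (Bmat x)).rank ∧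
          (Matrix.fromCols (Emat x) (Bmat x)).rank =
            (pencilC (Emat x) (Amat x) (Bmat x) lam).rank} := by
  refine ⟨{x | ∀ i : Fin 1, MvPolynomial.eval x (![PU l n m h] i) = 0},
    ⟨1, ![PU l n m h], rfl⟩, ?_, ?_⟩
  · intro hV
    have hx0 : x0 l n m ∈ {x | ∀ i : Fin 1, MvPolynomial.eval x (![PU l n m h] i) = 0} := by
      rw [hV]; exact Set.mem_univ _
    have := hx0 0
    simp only [Matrix.cons_val_zero] at this
    exact PU_x0_ne_zero l n m h this
  · intro x hx
    intro i
    by_contra hne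
    have hne' : MvPolynomial.eval x (PU l n m h) ≠ 0 := by
      have : i = 0 := Subsingleton.elim _ _
      rw [this] at hne
      simpa using hne
    exact hx (mem_S_of_PU l n m h x hne')

lemma notGeneric_of_gt (hn : 1 ≤ n) (hgt : n + m < l) :
    ¬ IsGeneric {x : SigmaIdx l n m → ℝ |
        ∀ lam : ℂ, 0 ≤ lam.re →
          (Matrix.fromCols (Emat x) (Matrix.fromCols (Amat x) (Bmat x))).rank =
            (Matrix.fromCols (Emat x) (Bmat x)).rank ∧
          (Matrix.fromCols (Emat x) (Bmat x)).rank =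
            (pencilC (Emat x) (Amat x) (Bmat x) lam).rank} := by
  rintro ⟨V, ⟨k, ps, rfl⟩, hne, hsub⟩
  obtain ⟨xs, hxs⟩ := (Set.ne_univ_iff_exists_notMem _).mp hne
  rw [Set.mem_setOf_eq] at hxs
  push_neg at hxs
  obtain ⟨i0, hi0⟩ := hxs
  have hall : ∀ x : SigmaIdx l n m → ℝ,
      MvPolynomial.eval x (ps i0 * QU l n m hn hgt) = 0 := by
    intro x
    rw [_root_.map_mul]
    by_cases hq : MvPolynomial.eval x (QU l n m hn hgt) = 0
    · rw [hq, mul_zero]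
    · have hxS : x ∉ {x : SigmaIdx l n m → ℝ |
          ∀ lam : ℂ, 0 ≤ lam.re →
            (Matrix.fromCols (Emat x) (Matrix.fromCols (Amat x) (Bmat x))).rank =
              (Matrix.fromCols (Emat x) (Bmat x)).rank ∧
            (Matrix.fromCols (Emat x) (Bmat x)).rank =
              (pencilC (Emat x) (Amat x) (Bmat x) lam).rank} :=
        notin_S_of_QU l n m hn hgt x hq
      have hxV := hsub hxS
      rw [Set.mem_setOf_eq] at hxV
      rw [hxV i0, zero_mul]
  have hzero : ps i0 * QU l n m hn hgt = 0 :=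
    MvPolynomial.funext (fun x => by rw [hall x, map_zero])
  rcases mul_eq_zero.mp hzero with hz | hz
  · rw [hz, map_zero] at hi0
    exact hi0 rfl
  · have := eval_QU_x2 l n m hn hgt
    rw [hz, map_zero] at this
    norm_num at this

lemma notGeneric_of_eq (heq : l = n + m) (hn : 1 ≤ n) :
    ¬ IsGeneric {x : SigmaIdx l n m → ℝ |
        ∀ lam : ℂ, 0 ≤ lam.re →
          (Matrix.fromCols (Emat x) (Matrix.fromCols (Amat x) (Bmat x))).rank =
            (Matrix.fromCols (Emat x) (Bmat x)).rank ∧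
          (Matrix.fromCols (Emat x) (Bmat x)).rank =
            (pencilC (Emat x) (Amat x) (Bmat x) lam).rank} := by
  rintro ⟨V, ⟨k, ps, rfl⟩, hne, hsub⟩
  obtain ⟨xs, hxs⟩ := (Set.ne_univ_iff_exists_notMem _).mp hne
  rw [Set.mem_setOf_eq] at hxs
  push_neg at hxs
  obtain ⟨i0, hi0⟩ := hxs
  have hvanish : ∀ y ∈ Uset l n m heq, MvPolynomial.eval y (ps i0) = 0 := by
    intro y hy
    have hyS : y ∉ {x : SigmaIdx l n m → ℝ |
        ∀ lam : ℂ, 0 ≤ lam.re →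
          (Matrix.fromCols (Emat x) (Matrix.fromCols (Amat x) (Bmat x))).rank =
            (Matrix.fromCols (Emat x) (Bmat x)).rank ∧
          (Matrix.fromCols (Emat x) (Bmat x)).rank =
            (pencilC (Emat x) (Amat x) (Bmat x) lam).rank} :=
      Uset_subset l n m heq hn y hy
    exact (hsub hyS) i0
  have hana : AnalyticOnNhd ℝ
      (fun y : SigmaIdx l n m → ℝ => MvPolynomial.eval y (ps i0)) Set.univ :=
    fun y _ => analyticAt_mvpoly_eval (ps i0) y
  have hz : (fun y : SigmaIdx l n m → ℝ => MvPolynomial.eval y (ps i0)) =ᶠ[nhds (x1 l n m)]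
      (0 : (SigmaIdx l n m → ℝ) → ℝ) :=
    Filter.eventuallyEq_of_mem
      ((isOpen_Uset l n m heq).mem_nhds (x1_mem_Uset l n m heq hn)) hvanish
  have hEq := hana.eqOn_zero_of_preconnected_of_eventuallyEq_zero
    isPreconnected_univ (Set.mem_univ (x1 l n m)) hz
  exact hi0 (hEq (Set.mem_univ xs))

end Main
end Stab

/-- The set of completely stabilizable DAE systems `d/dt(Ex) = Ax + Bu`, i.e. those with
`rk [E, A, B] = rk [E, B] = rk_ℂ [λE − A, B]` for every `λ ∈ ℂ` with `Re λ ≥ 0`, is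
generic in `Σ_{ℓ,n,m}` if, and only if, `ℓ < n + m`. -/
theorem statement_19 (l n m : ℕ) (hl : 1 ≤ l) (hn : 1 ≤ n) (hm : 1 ≤ m) :
    IsGeneric {x : SigmaIdx l n m → ℝ |
        ∀ lam : ℂ, 0 ≤ lam.re →
          (Matrix.fromCols (Emat x) (Matrix.fromCols (Amat x) (Bmat x))).rank =
            (Matrix.fromCols (Emat x) (Bmat x)).rank ∧
          (Matrix.fromCols (Emat x) (Bmat x)).rank =
            (pencilC (Emat x) (Amat x) (Bmat x) lam).rank} ↔
      l < n + m := by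
  constructor
  · intro hgen
    by_contra hge
    push_neg at hge
    rcases eq_or_lt_of_le hge with heq | hgt
    · exact Stab.notGeneric_of_eq l n m heq.symm hn hgen
    · exact Stab.notGeneric_of_gt l n m hn hgt hgen
  · intro h
    exact Stab.isGeneric_of_lt l n m h
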